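/- If A₁ and A₂ are order-d lattice subsets in diagonal sum (i.e., A₁ ⊆ X₁¹×⋯×X_d¹ and A₂ ⊆ X₁²×⋯×X_d² with X_j¹ ∩ X_j² = ∅ for every j), and M ⊆ P([d]) is non-empty and does not contain [d], then the M-covering number of A₁ ∪ A₂ equals the M-covering number of A₁ plus the M-covering number of A₂. -/
import Mathlib


open Finset

/-- A `B`-subspace of `[n₁]×⋯×[n_d]`: the set of points agreeing with some point `u`
on all coordinates outside `B`. -/
def IsBSubspace {d : ℕ} (n : Fin d → ℕ) (B : Finset (Fin d))
    (S : Set (∀ j, Fin (n j))) : Prop :=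
  ∃ u : ∀ j, Fin (n j), S = {x | ∀ j ∉ B, x j = u j}

/-- An `M`-subspace: a `B`-subspace for some `B ∈ M`. -/
def IsMSubspace {d : ℕ} (n : Fin d → ℕ) (M : Finset (Finset (Fin d)))
    (S : Set (∀ j, Fin (n j))) : Prop :=
  ∃ B ∈ M, IsBSubspace n B S

/-- The `M`-covering number: the least `k` such that `A` is covered by `k` `M`-subspaces. -/
noncomputable def covM {d : ℕ} (n : Fin d → ℕ) (M : Finset (Finset (Fin d)))
    (A : Set (∀ j, Fin (n j))) : ℕ :=
  sInf {k | ∃ S : Fin k → Set (∀ j, Fin (n j)),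
    (∀ i, IsMSubspace n M (S i)) ∧ A ⊆ ⋃ i, S i}

lemma covSet_nonempty {d : ℕ} (n : Fin d → ℕ) (M : Finset (Finset (Fin d)))
    (hM : M.Nonempty) (A : Set (∀ j, Fin (n j))) :
    {k | ∃ S : Fin k → Set (∀ j, Fin (n j)),
      (∀ i, IsMSubspace n M (S i)) ∧ A ⊆ ⋃ i, S i}.Nonempty := by
  obtain ⟨B, hB⟩ := hM
  let e := Fintype.equivFin (∀ j, Fin (n j))
  refine ⟨Fintype.card (∀ j, Fin (n j)),
    fun i => {x | ∀ j ∉ B, x j = e.symm i j},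
    fun i => ⟨B, hB, e.symm i, rfl⟩, fun x _ => ?_⟩
  exact Set.mem_iUnion.2 ⟨e x, by simp⟩

lemma covM_le_card {d : ℕ} (n : Fin d → ℕ) (M : Finset (Finset (Fin d)))
    (A : Set (∀ j, Fin (n j))) {k : ℕ} (t : Finset (Fin k))
    (S : Fin k → Set (∀ j, Fin (n j))) (hS : ∀ i, IsMSubspace n M (S i))
    (hA : A ⊆ ⋃ i ∈ t, S i) : covM n M A ≤ t.card := by
  apply Nat.sInf_le
  refine ⟨fun i => S (t.equivFin.symm i), fun i => hS _, fun x hx => ?_⟩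
  obtain ⟨i, hi, hxi⟩ := Set.mem_iUnion₂.1 (hA hx)
  refine Set.mem_iUnion.2 ⟨t.equivFin ⟨i, hi⟩, by simpa using hxi⟩

theorem diagonal_sum_additive {d : ℕ} (hd : 0 < d) (n : Fin d → ℕ) (hn : ∀ j, 0 < n j)
    (M : Finset (Finset (Fin d))) (hM : M.Nonempty) (hMd : Finset.univ ∉ M)
    (A₁ A₂ : Set (∀ j, Fin (n j))) (X₁ X₂ : ∀ j, Set (Fin (n j)))
    (h₁ : A₁ ⊆ {x | ∀ j, x j ∈ X₁ j}) (h₂ : A₂ ⊆ {x | ∀ j, x j ∈ X₂ j})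
    (hdisj : ∀ j, X₁ j ∩ X₂ j = ∅) :
    covM n M (A₁ ∪ A₂) = covM n M A₁ + covM n M A₂ := by
  classical
  apply le_antisymm
  · -- subadditivity
    obtain ⟨S₁, hS₁, hc₁⟩ : ∃ S : Fin (covM n M A₁) → Set (∀ j, Fin (n j)),
        (∀ i, IsMSubspace n M (S i)) ∧ A₁ ⊆ ⋃ i, S i :=
      Nat.sInf_mem (covSet_nonempty n M hM A₁)
    obtain ⟨S₂, hS₂, hc₂⟩ : ∃ S : Fin (covM n M A₂) → Set (∀ j, Fin (n j)),
        (∀ i, IsMSubspace n M (S i)) ∧ A₂ ⊆ ⋃ i, S i :=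
      Nat.sInf_mem (covSet_nonempty n M hM A₂)
    apply Nat.sInf_le
    refine ⟨fun i => Sum.elim S₁ S₂ (finSumFinEquiv.symm i), fun i => ?_, fun x hx => ?_⟩
    · rcases h : finSumFinEquiv.symm i with a | a <;> simp only [h, Sum.elim_inl, Sum.elim_inr]
      · exact hS₁ a
      · exact hS₂ a
    · rcases hx with hx | hx
      · obtain ⟨i, hi⟩ := Set.mem_iUnion.1 (hc₁ hx)
        exact Set.mem_iUnion.2 ⟨finSumFinEquiv (Sum.inl i), by simpa using hi⟩
      · obtain ⟨i, hi⟩ := Set.mem_iUnion.1 (hc₂ hx)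
        exact Set.mem_iUnion.2 ⟨finSumFinEquiv (Sum.inr i), by simpa using hi⟩
  · -- superadditivity
    obtain ⟨S, hS, hc⟩ : ∃ S : Fin (covM n M (A₁ ∪ A₂)) → Set (∀ j, Fin (n j)),
        (∀ i, IsMSubspace n M (S i)) ∧ A₁ ∪ A₂ ⊆ ⋃ i, S i :=
      Nat.sInf_mem (covSet_nonempty n M hM (A₁ ∪ A₂))
    let t₁ : Finset (Fin (covM n M (A₁ ∪ A₂))) :=
      Finset.univ.filter (fun i => (S i ∩ A₁).Nonempty)
    let t₂ : Finset (Fin (covM n M (A₁ ∪ A₂))) :=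
      Finset.univ.filter (fun i => (S i ∩ A₂).Nonempty)
    have hdisj12 : Disjoint t₁ t₂ := by
      rw [Finset.disjoint_left]
      intro i hi1 hi2
      obtain ⟨x, hxS, hxA⟩ := (Finset.mem_filter.1 hi1).2
      obtain ⟨y, hyS, hyA⟩ := (Finset.mem_filter.1 hi2).2
      obtain ⟨B, hB, u, hSu⟩ := hS i
      have hBne : B ≠ Finset.univ := fun h => hMd (h ▸ hB)
      obtain ⟨j, hj⟩ : ∃ j, j ∉ B := by
        by_contra h
        push_neg at h
        exact hBne (Finset.eq_univ_iff_forall.2 h)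
      have hx' : x j = u j := by rw [hSu] at hxS; exact hxS j hj
      have hy' : y j = u j := by rw [hSu] at hyS; exact hyS j hj
      have : x j ∈ X₁ j ∩ X₂ j := ⟨h₁ hxA j, by rw [hx', ← hy']; exact h₂ hyA j⟩
      rw [hdisj j] at this
      exact this
    have hcov1 : covM n M A₁ ≤ t₁.card := by
      refine covM_le_card n M A₁ t₁ S hS (fun x hx => ?_)
      obtain ⟨i, hi⟩ := Set.mem_iUnion.1 (hc (Or.inl hx))
      exact Set.mem_iUnion₂.2 ⟨i, Finset.mem_filter.2 ⟨Finset.mem_univ _, ⟨x, hi, hx⟩⟩, hi⟩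
    have hcov2 : covM n M A₂ ≤ t₂.card := by
      refine covM_le_card n M A₂ t₂ S hS (fun x hx => ?_)
      obtain ⟨i, hi⟩ := Set.mem_iUnion.1 (hc (Or.inr hx))
      exact Set.mem_iUnion₂.2 ⟨i, Finset.mem_filter.2 ⟨Finset.mem_univ _, ⟨x, hi, hx⟩⟩, hi⟩
    calc covM n M A₁ + covM n M A₂ ≤ t₁.card + t₂.card := Nat.add_le_add hcov1 hcov2
      _ = (t₁ ∪ t₂).card := (Finset.card_union_of_disjoint hdisj12).symm
      _ ≤ (Finset.univ : Finset (Fin (covM n M (A₁ ∪ A₂)))).card :=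
          Finset.card_le_card (Finset.subset_univ _)
      _ = covM n M (A₁ ∪ A₂) := by simp
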